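/- arXiv:2306.06015 — 2 statements merged into one kernel-verified Lean document; each statement's English description precedes it below -/
import Mathlib

section
/- Let g(s) = αs ln(s²) + μ|s|^{p-2}s with α > 0, μ < 0, and p > 2, and let G(s) = ∫₀ˢ g(t) dt = (α/2)(ln(s²) − 1)s² + (μ/p)|s|^p. Then there exists ξ₀ ≠ 0 with G(ξ₀) > 0 if and only if μ > −(αp/(p−2))·e^{−p/2}. -/
open Real

/-- For `g(s) = α s ln s² + μ |s|^{p-2} s` with `α > 0`, `μ < 0`, `p > 2`,
and `G(s) = (α/2)(ln s² − 1) s² + (μ/p)|s|^p`, there exists `ξ₀ ≠ 0` with `G(ξ₀) > 0`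
if and only if `μ > −(αp/(p−2)) e^{−p/2}`. -/
theorem stmt0 (α μ p : ℝ) (hα : 0 < α) (hμ : μ < 0) (hp : 2 < p)
    (G : ℝ → ℝ)
    (hG : ∀ s : ℝ, G s = α / 2 * (Real.log (s ^ 2) - 1) * s ^ 2 + μ / p * |s| ^ p) :
    (∃ ξ : ℝ, ξ ≠ 0 ∧ 0 < G ξ) ↔ μ > -(α * p / (p - 2)) * Real.exp (-p / 2) := by
  have hp2 : 0 < p - 2 := by linarith
  have hp0 : 0 < p := by linarith
  have hμ' : 0 < -μ := by linarith
  set A : ℝ := α * p / (-μ * (p - 2)) with hA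
  have hApos : 0 < A := div_pos (mul_pos hα hp0) (mul_pos hμ' hp2)
  have hiff : (μ > -(α * p / (p - 2)) * Real.exp (-p / 2)) ↔ Real.exp (p/2) < A := by
    have hE : Real.exp (-p / 2) = (Real.exp (p/2))⁻¹ := by
      rw [neg_div, Real.exp_neg]
    rw [gt_iff_lt, hE, hA]
    rw [lt_div_iff₀ (mul_pos hμ' hp2)]
    constructor
    · intro h
      have h1 : -μ < α * p / (p - 2) * (Real.exp (p/2))⁻¹ := by linarith
      have h2 : -μ * Real.exp (p/2) < α * p / (p - 2) := by
        rw [← div_eq_mul_inv, lt_div_iff₀ (Real.exp_pos _)] at h1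
        exact h1
      rw [lt_div_iff₀ hp2] at h2
      nlinarith [Real.exp_pos (p/2)]
    · intro h
      have h2 : -μ * Real.exp (p/2) < α * p / (p - 2) := by
        rw [lt_div_iff₀ hp2]; nlinarith
      rw [← div_eq_mul_inv, div_lt_iff₀ (Real.exp_pos _)]
      linarith
  rw [hiff]
  constructor
  · rintro ⟨ξ, hξ, hGξ⟩
    set t : ℝ := |ξ| with htdef
    have ht : 0 < t := abs_pos.mpr hξ
    have hGt : G ξ = t^2 * (α * Real.log t - α/2 + μ/p * t^(p-2)) := by
      have h1 : (ξ:ℝ)^2 = t^2 := (sq_abs ξ).symm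
      have h3 : t ^ p = t^2 * t^(p-2) := by
        rw [← Real.rpow_natCast t 2, ← Real.rpow_add ht]
        norm_num
      rw [hG, h1, Real.log_pow, h3]
      push_cast
      ring
    have hb : 0 < α * Real.log t - α/2 + μ/p * t^(p-2) := by
      by_contra hb
      push_neg at hb
      nlinarith [pow_pos ht 2]
    set u : ℝ := t ^ (p-2) with hu
    have hupos : 0 < u := Real.rpow_pos_of_pos ht _
    have hlogt : Real.log t = Real.log u / (p-2) := by
      rw [hu, Real.log_rpow ht]
      field_simp
    have hlog : Real.log u ≤ Real.log A + u / A - 1 := by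
      have h := Real.log_le_sub_one_of_pos (div_pos hupos hApos)
      rw [Real.log_div (ne_of_gt hupos) (ne_of_gt hApos)] at h
      linarith
    have h5 : α/(p-2) * (u/A) = -μ/p * u := by
      rw [hA]
      field_simp
    have h4 : α * Real.log t + μ/p * u ≤ α/(p-2) * (Real.log A - 1) := by
      rw [hlogt]
      have h6 := mul_le_mul_of_nonneg_left hlog (le_of_lt (div_pos hα hp2))
      have h7 : α * (Real.log u / (p-2)) = α/(p-2) * Real.log u := by ring
      have h8 : α/(p-2) * (Real.log A + u / A - 1)
          = α/(p-2) * (Real.log A - 1) + (-μ/p) * u := by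
        rw [← h5]; ring
      have h9 : -μ/p * u = -(μ/p * u) := by ring
      linarith
    have hkey : p/2 < Real.log A := by
      have hαd : 0 < α/(p-2) := div_pos hα hp2
      have h10 : α/2 < α/(p-2) * (Real.log A - 1) := by linarith
      by_contra hc
      push_neg at hc
      have h11 := mul_le_mul_of_nonneg_left (by linarith : Real.log A - 1 ≤ (p-2)/2) hαd.le
      have he : α/(p-2)*((p-2)/2) = α/2 := by field_simp
      linarith
    calc Real.exp (p/2) < Real.exp (Real.log A) := Real.exp_lt_exp.mpr hkey
      _ = A := Real.exp_log hApos
  · intro h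
    refine ⟨Real.exp (Real.log A / (p-2)), (Real.exp_pos _).ne', ?_⟩
    set ξ : ℝ := Real.exp (Real.log A / (p-2)) with hξdef
    have hξpos : 0 < ξ := Real.exp_pos _
    have habs : |ξ| = ξ := abs_of_pos hξpos
    have hlogξ : Real.log ξ = Real.log A / (p-2) := Real.log_exp _
    have hξp : ξ ^ (p-2) = A := by
      rw [Real.rpow_def_of_pos hξpos, hlogξ]
      rw [div_mul_cancel₀ _ (ne_of_gt hp2)]
      exact Real.exp_log hApos
    have h3 : ξ ^ p = ξ^2 * ξ^(p-2) := by
      rw [← Real.rpow_natCast ξ 2, ← Real.rpow_add hξpos]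
      norm_num
    have hGξ : G ξ = ξ^2 * (α * (Real.log A / (p-2)) - α/2 + μ/p * A) := by
      rw [hG, habs, Real.log_pow, h3, hξp, hlogξ]
      push_cast
      ring
    have hcoef : μ/p * A = -(α/(p-2)) := by
      rw [hA]
      field_simp [hμ.ne, hp0.ne', hp2.ne']
    have hlogA : p/2 < Real.log A := by
      have := Real.log_lt_log (Real.exp_pos _) h
      rwa [Real.log_exp] at this
    have hbr : 0 < α * (Real.log A / (p-2)) - α/2 + μ/p * A := by
      rw [hcoef]
      have hx : 0 < α/(p-2) * (Real.log A - p/2) := by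
        exact mul_pos (div_pos hα hp2) (by linarith)
      have : α * (Real.log A / (p-2)) - α/2 - α/(p-2) = α/(p-2) * (Real.log A - p/2) := by
        field_simp
        ring
      linarith
    rw [hGξ]
    exact mul_pos (pow_pos hξpos 2) hbr
end

section
/- Let N ≥ 2, p ∈ (2, 2N/(N−2)) (any p > 2 if N = 2), and let A be an N-function with lim_{s→0}A(s)/s² = ∞. Suppose u_n ∈ H¹(ℝ^N) is bounded, sup_n ∫_{ℝ^N} A(u_n) dx < ∞, and u_n → 0 in L^p(ℝ^N). Then u_n → 0 in L²(ℝ^N). -/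
open Real MeasureTheory Filter Topology

/-- a variant of Lions' lemma: if `u_n` is bounded in `H¹(ℝ^N)`,
`sup_n ∫ A(u_n) < ∞` for an N-function `A` with `A(s)/s² → ∞` as `s → 0`, and
`u_n → 0` in `L^p` with `2 < p < 2N/(N−2)` (any `p > 2` if `N = 2`), then `u_n → 0`
in `L²(ℝ^N)`. -/
theorem stmt14 (N : ℕ) (hN : 2 ≤ N) (p : ℝ) (hp : 2 < p)
    (hp2 : N = 2 ∨ p < 2 * N / ((N : ℝ) - 2))
    (A : ℝ → ℝ) (heven : ∀ s : ℝ, A (-s) = A s)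
    (hconv : ConvexOn ℝ Set.univ A) (hA0 : A 0 = 0) (hnn : ∀ s : ℝ, 0 ≤ A s)
    (h2 : Tendsto (fun s => A s / s ^ 2) (𝓝[≠] (0 : ℝ)) atTop)
    (u : ℕ → EuclideanSpace ℝ (Fin N) → ℝ)
    (hmeas : ∀ n, AEStronglyMeasurable (u n) volume)
    (hbdd : ∃ M : ℝ, ∀ n, (∫ x, ‖gradient (u n) x‖ ^ 2) + (∫ x, (u n x) ^ 2) ≤ M)
    (hAint : ∀ n, Integrable (fun x => A (u n x)))
    (hAbdd : ∃ M : ℝ, ∀ n, (∫ x, A (u n x)) ≤ M)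
    (h2int : ∀ n, Integrable (fun x => (u n x) ^ 2))
    (hpint : ∀ n, Integrable (fun x => |u n x| ^ p))
    (hLp : Tendsto (fun n => ∫ x, |u n x| ^ p) atTop (𝓝 0)) :
    Tendsto (fun n => ∫ x, (u n x) ^ 2) atTop (𝓝 0) := by
  obtain ⟨M, hM⟩ := hAbdd
  have hM0 : 0 ≤ M := le_trans (integral_nonneg fun x => hnn _) (hM 0)
  rw [Metric.tendsto_atTop]
  intro ε hε
  set ε₁ := ε / (2 * (M + 1)) with hε₁def
  have hε₁ : 0 < ε₁ := div_pos hε (by linarith)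
  have hev := h2.eventually (eventually_ge_atTop (1 / ε₁))
  rw [Filter.Eventually, Metric.mem_nhdsWithin_iff] at hev
  obtain ⟨δ, hδ, hδ'⟩ := hev
  set c := δ ^ (2 - p) with hc
  have hc0 : 0 < c := Real.rpow_pos_of_pos hδ _
  have key : ∀ n, (∫ x, (u n x) ^ 2) ≤ ε₁ * M + c * ∫ x, |u n x| ^ p := by
    intro n
    have hpt : ∀ x, (u n x) ^ 2 ≤ ε₁ * A (u n x) + c * |u n x| ^ p := by
      intro x
      set s := u n x with hs
      have hrnn : (0:ℝ) ≤ c * |s| ^ p := mul_nonneg hc0.le (Real.rpow_nonneg (abs_nonneg s) p)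
      by_cases hsd : |s| < δ
      · rcases eq_or_ne s 0 with h0 | h0
        · rw [h0]
          simp [hA0, Real.zero_rpow (show p ≠ 0 from ne_of_gt (by linarith))]
        · have h1e : 1 / ε₁ ≤ A s / s ^ 2 :=
            hδ' (Set.mem_inter (by simpa [Real.dist_eq] using hsd) h0)
          have hs2 : (0:ℝ) < s ^ 2 := by positivity
          have : s ^ 2 ≤ ε₁ * A s := by
            rw [div_le_div_iff₀ hε₁ hs2] at h1e
            nlinarith
          linarith
      · push_neg at hsd
        have hsp : 0 < |s| := lt_of_lt_of_le hδ hsd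
        have h1 : (1:ℝ) ≤ c * |s| ^ (p - 2) := by
          have : δ ^ (p - 2) ≤ |s| ^ (p - 2) :=
            Real.rpow_le_rpow hδ.le hsd (by linarith)
          calc (1:ℝ) = δ ^ (2 - p) * δ ^ (p - 2) := by
                rw [← Real.rpow_add hδ]; norm_num
            _ ≤ c * |s| ^ (p - 2) := mul_le_mul_of_nonneg_left this hc0.le
        have h2' : s ^ 2 ≤ c * |s| ^ p := by
          have habs : s ^ 2 = |s| ^ (2:ℝ) := by
            rw [Real.rpow_two, sq_abs]
          have : |s| ^ p = |s| ^ (p - 2) * |s| ^ (2:ℝ) := by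
            rw [← Real.rpow_add hsp]; ring_nf
          rw [habs, this]
          calc |s| ^ (2:ℝ) = 1 * |s| ^ (2:ℝ) := by ring
            _ ≤ (c * |s| ^ (p - 2)) * |s| ^ (2:ℝ) :=
              mul_le_mul_of_nonneg_right h1 (Real.rpow_nonneg (abs_nonneg s) 2)
            _ = c * (|s| ^ (p - 2) * |s| ^ (2:ℝ)) := by ring
        have hA : 0 ≤ ε₁ * A s := mul_nonneg hε₁.le (hnn s)
        linarith
    calc (∫ x, (u n x) ^ 2)
        ≤ ∫ x, (ε₁ * A (u n x) + c * |u n x| ^ p) :=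
          integral_mono (h2int n) (((hAint n).const_mul ε₁).add ((hpint n).const_mul c)) hpt
      _ = ε₁ * (∫ x, A (u n x)) + c * ∫ x, |u n x| ^ p := by
          rw [integral_add ((hAint n).const_mul ε₁) ((hpint n).const_mul c),
            integral_const_mul, integral_const_mul]
      _ ≤ ε₁ * M + c * ∫ x, |u n x| ^ p :=
          add_le_add_left (mul_le_mul_of_nonneg_left (hM n) hε₁.le) _
  have hε₁M : ε₁ * M < ε / 2 := by
    have h1 : ε₁ * (M + 1) = ε / 2 := by
      rw [hε₁def]; field_simp
    nlinarith
  have hcLp : Tendsto (fun n => c * ∫ x, |u n x| ^ p) atTop (𝓝 0) := by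
    simpa using hLp.const_mul c
  have hevn : ∀ᶠ n in atTop, c * (∫ x, |u n x| ^ p) < ε / 2 :=
    hcLp.eventually_lt_const (by linarith)
  rw [eventually_atTop] at hevn
  obtain ⟨n₀, hn₀⟩ := hevn
  refine ⟨n₀, fun n hn => ?_⟩
  have hnn2 : 0 ≤ ∫ x, (u n x) ^ 2 := integral_nonneg fun x => sq_nonneg _
  rw [Real.dist_eq, sub_zero, abs_of_nonneg hnn2]
  calc (∫ x, (u n x) ^ 2) ≤ ε₁ * M + c * ∫ x, |u n x| ^ p := key n
    _ < ε / 2 + ε / 2 := add_lt_add hε₁M (hn₀ n hn)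
    _ = ε := by ring
end
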